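/- There exists a partition Ω = Ω_1 ∪ ⋯ ∪ Ω_r into pairwise disjoint subsets such that for each i = 1, …, r the family (π_i(v_ω))_{ω ∈ Ω_i} is an R-basis of W_i. -/

import Mathlib

open IsLocalRing in
lemma exists_isUnit_of_isUnit_sum' {R : Type*} [CommRing R] [IsLocalRing R]
    {α : Type*} (s : Finset α) (f : α → R) (h : IsUnit (∑ x ∈ s, f x)) :
    ∃ x ∈ s, IsUnit (f x) := by
  classical
  induction s using Finset.induction_on with
  | empty => simp only [Finset.sum_empty] at h; exact absurd (isUnit_zero_iff.mp h) zero_ne_one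
  | @insert a s hx ih =>
    rw [Finset.sum_insert hx] at h
    rcases IsLocalRing.isUnit_or_isUnit_of_isUnit_add h with h1 | h2
    · exact ⟨_, Finset.mem_insert_self _ _, h1⟩
    · obtain ⟨x, hxs, hu⟩ := ih h2
      exact ⟨x, Finset.mem_insert_of_mem hxs, hu⟩

/-- **Theorem 2.1 (Brauer's basis-partition theorem).**
Let `R` be a commutative local ring, `Ω` a finite set, `V` an `R`-module with
basis `(v_ω)_{ω ∈ Ω}`, and suppose `V = W_1 ⊕ ⋯ ⊕ W_r` is an internal direct
sum of submodules `W i`, with `π i : V → V` the projection onto `W i` along the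
other summands.  Then there is a partition `Ω = Ω_1 ∪ ⋯ ∪ Ω_r` into pairwise
disjoint subsets such that for each `i` the family `(π i (v ω))_{ω ∈ Ω_i}` is
an `R`-basis of `W i` (it is linearly independent and spans `W i`). -/
theorem stmt10 {R : Type*} [CommRing R] [IsLocalRing R]
    {V : Type*} [AddCommGroup V] [Module R V]
    {Ω : Type*} [Fintype Ω] (v : Module.Basis Ω R V)
    {r : ℕ} (W : Fin r → Submodule R V) (π : Fin r → V →ₗ[R] V)
    (hmem : ∀ (i : Fin r) (x : V), π i x ∈ W i)
    (hsum : ∀ x : V, ∑ i, π i x = x)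
    (hon : ∀ i : Fin r, ∀ x ∈ W i, π i x = x)
    (hoff : ∀ i j : Fin r, i ≠ j → ∀ x ∈ W j, π i x = 0) :
    ∃ Ωs : Fin r → Set Ω,
      (∀ i j : Fin r, i ≠ j → Disjoint (Ωs i) (Ωs j)) ∧
      (⋃ i, Ωs i) = Set.univ ∧
      ∀ i : Fin r,
        LinearIndependent R (fun ω : Ωs i => π i (v ω)) ∧
        Submodule.span R (Set.range fun ω : Ωs i => π i (v ω)) = W i := by
  classical
  -- rows of coordinate vectors
  set g : Ω → Fin r → (Ω → R) := fun ω i => (v.repr (π i (v ω)) : Ω → R) with hg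
  have hrowsum : (Matrix.of fun ω ω' => (∑ i, g ω i) ω') = (1 : Matrix Ω Ω R) := by
    funext ω ω'
    have h1 : (∑ i, g ω i) ω' = ∑ i, (v.repr (π i (v ω))) ω' := by
      simp [hg, Finset.sum_apply]
    have h2 : ∑ i : Fin r, (v.repr (π i (v ω))) ω' = (v.repr (∑ i, π i (v ω))) ω' := by
      rw [map_sum, Finsupp.finset_sum_apply]
    rw [Matrix.of_apply, h1, h2, hsum, v.repr_self, Matrix.one_apply, Finsupp.single_apply]
  have hexp := MultilinearMap.map_sum
    ((Matrix.detRowAlternating : (Ω → R) [⋀^Ω]→ₗ[R] R).toMultilinearMap) (g := g)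
  have hdet1 : IsUnit (∑ c : Ω → Fin r,
      (Matrix.detRowAlternating (fun ω => g ω (c ω)) : R)) := by
    simp only [AlternatingMap.coe_multilinearMap] at hexp
    rw [← hexp]
    have h1 : Matrix.detRowAlternating (fun ω => ∑ i, g ω i) = 1 := by
      show Matrix.det (Matrix.of fun ω ω' => (∑ i, g ω i) ω') = 1
      rw [hrowsum, Matrix.det_one]
    rw [h1]; exact isUnit_one
  obtain ⟨c, -, hc⟩ := exists_isUnit_of_isUnit_sum' Finset.univ _ hdet1
  -- the chosen family
  set u : Ω → V := fun ω => π (c ω) (v ω) with hu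
  -- the coordinate matrix of u
  set A : Matrix Ω Ω R := Matrix.of fun ω ω' => (v.repr (u ω)) ω' with hA
  have hAdet : IsUnit A.det := by
    convert hc using 1
    rfl
  have hAunit : IsUnit A := (Matrix.isUnit_iff_isUnit_det A).mpr hAdet
  have hATunit : IsUnit A.transpose := (Matrix.isUnit_iff_isUnit_det _).mpr (by rwa [Matrix.det_transpose])
  -- turn into a linear automorphism
  have hfunit : IsUnit (Matrix.toLin v v A.transpose) :=
    hATunit.map (Matrix.toLinAlgEquiv v : Matrix Ω Ω R ≃ₐ[R] Module.End R V)
  let e : V ≃ₗ[R] V := LinearMap.GeneralLinearGroup.generalLinearEquiv R V hfunit.unit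
  have he : (e : V →ₗ[R] V) = Matrix.toLin v v A.transpose := by
    rw [LinearMap.GeneralLinearGroup.generalLinearEquiv_to_linearMap]; exact hfunit.unit_spec
  let b : Module.Basis Ω R V := v.map e
  have hb : ∀ ω, b ω = u ω := by
    intro ω
    have : b ω = (e : V →ₗ[R] V) (v ω) := rfl
    rw [this, he, Matrix.toLin_self]
    simp only [Matrix.transpose_apply, hA, Matrix.of_apply]
    exact v.sum_repr (u ω)
  refine ⟨fun i => {ω | c ω = i}, ?_, ?_, ?_⟩
  · intro i j hij
    rw [Set.disjoint_left]
    rintro ω (hi : c ω = i) (hj : c ω = j)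
    exact hij (hi ▸ hj)
  · ext ω; simp only [Set.mem_iUnion, Set.mem_univ, iff_true]
    exact ⟨c ω, rfl⟩
  · intro i
    have hcoincide : (fun ω : {ω | c ω = i} => π i (v ω)) = fun ω => b ω.1 := by
      funext ω
      rw [hb, hu]
      exact congrArg (fun j => π j (v ω.1)) ω.2.symm
    constructor
    · rw [hcoincide]
      exact b.linearIndependent.comp Subtype.val Subtype.val_injective
    · apply le_antisymm
      · rw [Submodule.span_le]
        rintro x ⟨ω, rfl⟩
        exact hmem i (v ω.1)
      · intro w hw
        have hπb : ∀ ω : Ω, π i (b ω) = if c ω = i then b ω else 0 := by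
          intro ω
          rw [hb]
          by_cases hci : c ω = i
          · rw [if_pos hci, ← hci]
            exact hon (c ω) _ (hmem _ _)
          · rw [if_neg hci]
            exact hoff i (c ω) (fun h => hci h.symm) _ (hmem _ _)
        have hwrep : w = ∑ ω, b.repr w ω • π i (b ω) := by
          conv_lhs => rw [← hon i w hw, ← b.sum_repr w]
          rw [map_sum]
          simp only [map_smul]
        rw [hwrep]
        apply Submodule.sum_mem
        intro ω _
        rw [hπb]
        by_cases hci : c ω = i
        · rw [if_pos hci]
          apply Submodule.smul_mem
          apply Submodule.subset_span
          refine ⟨⟨ω, hci⟩, ?_⟩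
          show π i (v ω) = b ω
          rw [hb]
          exact (congrArg (fun j => (π j) (v ω)) hci).symm
        · rw [if_neg hci, smul_zero]
          exact Submodule.zero_mem _
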